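/- Projection sandwich for subsets of coordinate k-planes: let V be an affine subspace of EuclideanSpace ℝ (Fin n) of dimension k and let S ⊆ V be a Borel set. Then μH[k](S) ≤ Σ_γ μH[k](π_γ '' S) ≤ √(C(n,k)) · μH[k](S), where the sum runs over all subsets γ of {0,…,n−1} of cardinality k, π_γ is the coordinate projection onto the coordinates in γ, and C(n,k) is the binomial coefficient n choose k. -/

import Mathlib

open MeasureTheory Finset

/-- The coordinate projection `π_γ : ℝⁿ → ℝᵏ` associated to a `k`-element subset
`γ` of the coordinates: it sends `x` to the vector of its coordinates with indices
in `γ`, listed in increasing order. -/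
noncomputable def coordProj {n k : ℕ} (γ : Finset (Fin n)) (h : γ.card = k) :
    EuclideanSpace ℝ (Fin n) → EuclideanSpace ℝ (Fin k) :=
  fun x => WithLp.toLp 2 (fun i => x (γ.orderEmbOfFin h i))

set_option maxHeartbeats 1000000

noncomputable def coordProjL {n k : ℕ} (γ : Finset (Fin n)) (h : γ.card = k) :
    EuclideanSpace ℝ (Fin n) →ₗ[ℝ] EuclideanSpace ℝ (Fin k) where
  toFun := coordProj γ h
  map_add' _ _ := rfl
  map_smul' _ _ := rfl

section CauchyBinet
open Equiv Matrix

variable {R : Type*} [CommRing R] {k n : ℕ}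

private theorem cb_aux {A : Matrix (Fin k) (Fin n) R} {B : Matrix (Fin n) (Fin k) R}
    {p : Fin k → Fin n} (H : ¬Function.Injective p) :
    (∑ σ : Perm (Fin k), (Equiv.Perm.sign σ : R) * ∏ x, A (σ x) (p x) * B (p x) x) = 0 := by
  obtain ⟨i, j, hpij, hij⟩ : ∃ i j, p i = p j ∧ i ≠ j := by
    rw [Function.Injective] at H
    push_neg at H
    exact H
  exact
    sum_involution (fun σ _ => σ * Equiv.swap i j)
      (fun σ _ => by
        have : (∏ x, A (σ x) (p x)) = ∏ x, A ((σ * Equiv.swap i j) x) (p x) :=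
          Fintype.prod_equiv (Equiv.swap i j) _ _ (by simp [Equiv.apply_swap_eq_self hpij])
        simp [this, Equiv.Perm.sign_swap hij, -Equiv.Perm.sign_swap', prod_mul_distrib])
      (fun σ _ _ => (not_congr Equiv.mul_swap_eq_iff).mpr hij) (fun _ _ => mem_univ _)
      fun σ _ => Equiv.mul_swap_involutive i j σ

private theorem perm_sum_key (M N : Matrix (Fin k) (Fin k) R) :
    (∑ τ : Perm (Fin k), ∑ σ : Perm (Fin k),
      (Equiv.Perm.sign σ : R) * ∏ i, M (σ i) (τ i) * N (τ i) i) = M.det * N.det := by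
  have h1 : ∀ τ : Perm (Fin k),
      (∑ σ : Perm (Fin k), (Equiv.Perm.sign σ : R) * ∏ i, M (σ i) (τ i))
        = (Equiv.Perm.sign τ : R) * M.det := by
    intro τ
    have : (M.submatrix id τ).det = (Equiv.Perm.sign τ : R) * M.det := Matrix.det_permute' τ M
    rw [← this, Matrix.det_apply']
    rfl
  calc (∑ τ : Perm (Fin k), ∑ σ : Perm (Fin k),
      (Equiv.Perm.sign σ : R) * ∏ i, M (σ i) (τ i) * N (τ i) i)
      = ∑ τ : Perm (Fin k), (∑ σ : Perm (Fin k), (Equiv.Perm.sign σ : R) * ∏ i, M (σ i) (τ i))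
          * ∏ i, N (τ i) i := by
        refine Finset.sum_congr rfl fun τ _ => ?_
        rw [Finset.sum_mul]
        refine Finset.sum_congr rfl fun σ _ => ?_
        rw [prod_mul_distrib, mul_assoc]
    _ = M.det * ∑ τ : Perm (Fin k), (Equiv.Perm.sign τ : R) * ∏ i, N (τ i) i := by
        rw [Finset.mul_sum]
        refine Finset.sum_congr rfl fun τ _ => ?_
        rw [h1 τ]; ring
    _ = M.det * N.det := by rw [← Matrix.det_apply']

private theorem cauchy_binet (A : Matrix (Fin k) (Fin n) R) (B : Matrix (Fin n) (Fin k) R) :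
    (A * B).det = ∑ γ ∈ (Finset.powersetCard k (Finset.univ : Finset (Fin n))).attach,
      (A.submatrix id (γ.1.orderEmbOfFin (Finset.mem_powersetCard.mp γ.2).2)).det *
      (B.submatrix (γ.1.orderEmbOfFin (Finset.mem_powersetCard.mp γ.2).2) id).det := by
  classical
  have himg : ∀ (γ : {x // x ∈ Finset.powersetCard k (Finset.univ : Finset (Fin n))})
      (τ : Perm (Fin k)),
      Finset.image ((γ.1.orderEmbOfFin (Finset.mem_powersetCard.mp γ.2).2) ∘ τ) Finset.univ
        = γ.1 := by
    intro γ τ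
    apply Finset.coe_injective
    rw [Finset.coe_image, Finset.coe_univ, Set.image_univ, Set.range_comp,
      Equiv.range_eq_univ, Set.image_univ]
    exact Finset.range_orderEmbOfFin γ.1 (Finset.mem_powersetCard.mp γ.2).2
  have step1 : (A * B).det = ∑ p : Fin k → Fin n, ∑ σ : Perm (Fin k),
      (Equiv.Perm.sign σ : R) * ∏ i, A (σ i) (p i) * B (p i) i := by
    simp only [Matrix.det_apply', Matrix.mul_apply, prod_univ_sum, Finset.mul_sum,
      Fintype.piFinset_univ]
    rw [Finset.sum_comm]
  rw [step1,
    ← Finset.sum_filter_add_sum_filter_not Finset.univ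
      (fun p : Fin k → Fin n => Function.Injective p)]
  have h0 : (∑ p ∈ Finset.univ.filter (fun p : Fin k → Fin n => ¬ Function.Injective p),
      ∑ σ : Perm (Fin k), (Equiv.Perm.sign σ : R) * ∏ i, A (σ i) (p i) * B (p i) i) = 0 :=
    Finset.sum_eq_zero fun p hp => cb_aux (Finset.mem_filter.mp hp).2
  rw [h0, add_zero]
  calc (∑ p ∈ Finset.univ.filter (fun p : Fin k → Fin n => Function.Injective p),
      ∑ σ : Perm (Fin k), (Equiv.Perm.sign σ : R) * ∏ i, A (σ i) (p i) * B (p i) i)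
      = ∑ x ∈ (Finset.powersetCard k (Finset.univ : Finset (Fin n))).attach ×ˢ
          (Finset.univ : Finset (Perm (Fin k))),
        ∑ σ : Perm (Fin k), (Equiv.Perm.sign σ : R) *
          ∏ i, (A.submatrix id (x.1.1.orderEmbOfFin (Finset.mem_powersetCard.mp x.1.2).2))
              (σ i) (x.2 i) *
            (B.submatrix (x.1.1.orderEmbOfFin (Finset.mem_powersetCard.mp x.1.2).2) id)
              (x.2 i) i := by
        refine (Finset.sum_bij (fun x _ =>
          ((x.1.1.orderEmbOfFin (Finset.mem_powersetCard.mp x.1.2).2) ∘ x.2 : Fin k → Fin n))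
          ?_ ?_ ?_ ?_).symm
        · intro x hx
          simp only [Finset.mem_filter, Finset.mem_univ, true_and]
          exact (x.1.1.orderEmbOfFin (Finset.mem_powersetCard.mp x.1.2).2).injective.comp
            x.2.injective
        · rintro ⟨γ₁, τ₁⟩ h₁ ⟨γ₂, τ₂⟩ h₂ heq
          simp only at heq
          have hγ : γ₁ = γ₂ := by
            apply Subtype.ext
            rw [← himg γ₁ τ₁, ← himg γ₂ τ₂, heq]
          subst hγ
          have hτ : τ₁ = τ₂ := by
            apply Equiv.ext
            intro i
            exact (γ₁.1.orderEmbOfFin (Finset.mem_powersetCard.mp γ₁.2).2).injective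
              (congrFun heq i)
          rw [hτ]
        · intro p hp
          have hpinj : Function.Injective p := (Finset.mem_filter.mp hp).2
          set γ : Finset (Fin n) := Finset.image p Finset.univ with hγdef
          have hγcard : γ.card = k := by
            rw [hγdef, Finset.card_image_of_injective _ hpinj, Finset.card_univ,
              Fintype.card_fin]
          have hγmem : γ ∈ Finset.powersetCard k (Finset.univ : Finset (Fin n)) :=
            Finset.mem_powersetCard.mpr ⟨Finset.subset_univ _, hγcard⟩
          have hmem : ∀ i, p i ∈ γ := fun i => Finset.mem_image_of_mem p (Finset.mem_univ i)
          set g : Fin k → Fin k := fun i => (γ.orderIsoOfFin hγcard).symm ⟨p i, hmem i⟩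
            with hgdef
          have hginj : Function.Injective g := by
            intro a b hab
            apply hpinj
            have := (γ.orderIsoOfFin hγcard).symm.injective hab
            exact congrArg Subtype.val this
          refine ⟨⟨⟨γ, hγmem⟩, Equiv.ofBijective g (Finite.injective_iff_bijective.1 hginj)⟩,
            Finset.mem_product.mpr ⟨Finset.mem_attach _ _, Finset.mem_univ _⟩, ?_⟩
          funext i
          show (γ.orderEmbOfFin (Finset.mem_powersetCard.mp hγmem).2) (g i) = p i
          rw [← Finset.coe_orderIsoOfFin_apply]
          simp [hgdef]
        · rintro ⟨γ, τ⟩ h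
          rfl
    _ = ∑ γ ∈ (Finset.powersetCard k (Finset.univ : Finset (Fin n))).attach,
        ∑ τ : Perm (Fin k), ∑ σ : Perm (Fin k), (Equiv.Perm.sign σ : R) *
          ∏ i, (A.submatrix id (γ.1.orderEmbOfFin (Finset.mem_powersetCard.mp γ.2).2))
              (σ i) (τ i) *
            (B.submatrix (γ.1.orderEmbOfFin (Finset.mem_powersetCard.mp γ.2).2) id)
              (τ i) i := Finset.sum_product ..
    _ = ∑ γ ∈ (Finset.powersetCard k (Finset.univ : Finset (Fin n))).attach,
        (A.submatrix id (γ.1.orderEmbOfFin (Finset.mem_powersetCard.mp γ.2).2)).det *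
        (B.submatrix (γ.1.orderEmbOfFin (Finset.mem_powersetCard.mp γ.2).2) id).det :=
      Finset.sum_congr rfl fun γ _ => perm_sum_key _ _

end CauchyBinet

theorem sum_sq_det_eq_one {n k : ℕ}
    (ι : EuclideanSpace ℝ (Fin k) →ₗᵢ[ℝ] EuclideanSpace ℝ (Fin n)) :
    ∑ γ ∈ (Finset.powersetCard k (Finset.univ : Finset (Fin n))).attach,
      (LinearMap.det ((coordProjL γ.1 (Finset.mem_powersetCard.mp γ.2).2).comp
        ι.toLinearMap)) ^ 2 = 1 := by
  classical
  set bE := (EuclideanSpace.basisFun (Fin k) ℝ).toBasis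
  set bF := (EuclideanSpace.basisFun (Fin n) ℝ).toBasis
  set M : Matrix (Fin n) (Fin k) ℝ := LinearMap.toMatrix bE bF ι.toLinearMap with hM
  have hMentry : ∀ j i, M j i = ι (bE i) j := by
    intro j i
    simp [hM, LinearMap.toMatrix_apply, bF]
  have h1 : M.transpose * M = 1 := by
    ext i l
    have hinner := ι.inner_map_map (bE i) (bE l)
    simp only [PiLp.inner_apply, RCLike.inner_apply, starRingEnd_apply, star_trivial] at hinner
    have hE : (inner ℝ (bE i) (bE l) : ℝ) = if i = l then 1 else 0 := by
      have := (EuclideanSpace.basisFun (Fin k) ℝ).orthonormal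
      rw [orthonormal_iff_ite] at this
      simpa [bE] using this i l
    simp only [PiLp.inner_apply, RCLike.inner_apply, starRingEnd_apply, star_trivial] at hE
    simp only [Matrix.mul_apply, Matrix.transpose_apply, Matrix.one_apply, hMentry]
    rw [← hE, ← hinner]; exact Finset.sum_congr rfl fun x _ => mul_comm _ _
  have h2 : ∀ (γ : Finset (Fin n)) (h : γ.card = k),
      LinearMap.toMatrix bE bE ((coordProjL γ h).comp ι.toLinearMap)
        = M.submatrix (γ.orderEmbOfFin h) id := by
    intro γ h
    ext i l
    simp only [LinearMap.toMatrix_apply, LinearMap.comp_apply, Matrix.submatrix_apply, id_eq,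
      hMentry]
    simp [bE, coordProjL, coordProj]
    rfl
  have hdet : ∀ (γ : Finset (Fin n)) (h : γ.card = k),
      LinearMap.det ((coordProjL γ h).comp ι.toLinearMap)
        = (M.submatrix (γ.orderEmbOfFin h) id).det := by
    intro γ h
    rw [← LinearMap.det_toMatrix bE, h2 γ h]
  calc (∑ γ ∈ (Finset.powersetCard k (Finset.univ : Finset (Fin n))).attach,
      (LinearMap.det ((coordProjL γ.1 (Finset.mem_powersetCard.mp γ.2).2).comp
        ι.toLinearMap)) ^ 2)
      = ∑ γ ∈ (Finset.powersetCard k (Finset.univ : Finset (Fin n))).attach,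
        (M.transpose.submatrix id (γ.1.orderEmbOfFin (Finset.mem_powersetCard.mp γ.2).2)).det *
        (M.submatrix (γ.1.orderEmbOfFin (Finset.mem_powersetCard.mp γ.2).2) id).det := by
        refine Finset.sum_congr rfl fun γ _ => ?_
        rw [hdet γ.1 (Finset.mem_powersetCard.mp γ.2).2, ← Matrix.transpose_submatrix,
          Matrix.det_transpose, sq]
    _ = (M.transpose * M).det := (cauchy_binet M.transpose M).symm
    _ = 1 := by rw [h1, Matrix.det_one]

private theorem projection_sandwich_aux (k n : ℕ) (V : AffineSubspace ℝ (EuclideanSpace ℝ (Fin n)))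
    (hV : Module.finrank ℝ V.direction = k)
    (S : Set (EuclideanSpace ℝ (Fin n))) (hSV : S ⊆ (V : Set (EuclideanSpace ℝ (Fin n))))
    (hS : MeasurableSet S) (p : EuclideanSpace ℝ (Fin n)) (hp : p ∈ V) :
    μH[k] S ≤
        (∑ γ ∈ (Finset.powersetCard k (Finset.univ : Finset (Fin n))).attach,
          μH[k] (coordProj γ.1 (Finset.mem_powersetCard.mp γ.2).2 '' S)) ∧
      (∑ γ ∈ (Finset.powersetCard k (Finset.univ : Finset (Fin n))).attach,
          μH[k] (coordProj γ.1 (Finset.mem_powersetCard.mp γ.2).2 '' S)) ≤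
        ENNReal.ofReal (Real.sqrt (n.choose k)) * μH[k] S := by
  classical
  have hsq : ∀ ι : EuclideanSpace ℝ (Fin k) →ₗᵢ[ℝ] EuclideanSpace ℝ (Fin n),
      ∑ γ ∈ (Finset.powersetCard k (Finset.univ : Finset (Fin n))).attach,
        (LinearMap.det ((coordProjL γ.1 (Finset.mem_powersetCard.mp γ.2).2).comp
          ι.toLinearMap)) ^ 2 = 1 := fun ι => sum_sq_det_eq_one ι
  have : FiniteDimensional ℝ V.direction := inferInstance
  set b : OrthonormalBasis (Fin k) ℝ V.direction :=
    (stdOrthonormalBasis ℝ V.direction).reindex (finCongr hV) with hb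
  set ι : EuclideanSpace ℝ (Fin k) →ₗᵢ[ℝ] EuclideanSpace ℝ (Fin n) := (V.direction.subtypeₗᵢ).comp b.repr.symm.toLinearIsometry with hι
  have hrange : Set.range ι = (V.direction : Set (EuclideanSpace ℝ (Fin n))) := by
    have hsurj : Function.Surjective b.repr.symm.toLinearIsometry := b.repr.symm.surjective
    rw [hι, LinearIsometry.coe_comp, Set.range_comp, hsurj.range_eq, Set.image_univ]
    simp [Submodule.coe_subtypeₗᵢ, Subtype.range_coe]
  set φ : EuclideanSpace ℝ (Fin k) → EuclideanSpace ℝ (Fin n) := fun x => p + ι x with hφ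
  have hφiso : Isometry φ := by
    apply Isometry.of_dist_eq
    intro x y
    simp only [hφ, dist_add_left]
    exact ι.isometry.dist_eq x y
  have hSrange : S ⊆ Set.range φ := by
    intro x hx
    have hxV : x ∈ V := hSV hx
    have : x - p ∈ V.direction := AffineSubspace.vsub_mem_direction hxV hp
    obtain ⟨y, hy⟩ : x - p ∈ Set.range ⇑ι := by rw [hrange]; exact this
    exact ⟨y, by simp [hφ, hy]⟩
  set T : Set (EuclideanSpace ℝ (Fin k)) := φ ⁻¹' S with hT
  have hTmeas : MeasurableSet T := hφiso.continuous.measurable hS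
  have hST : φ '' T = S := Set.image_preimage_eq_of_subset hSrange
  have hμS : μH[k] S = μH[k] T := by
    rw [← hST]
    exact hφiso.hausdorffMeasure_image (Or.inl (by positivity)) T
  haveI hHaar : Measure.IsAddHaarMeasure (μH[(k:ℝ)] : Measure (EuclideanSpace ℝ (Fin k))) := by
    have h := MeasureTheory.isAddHaarMeasure_hausdorffMeasure
      (E := EuclideanSpace ℝ (Fin k))
    simp only [finrank_euclideanSpace_fin] at h
    exact h
  have hterm : ∀ (γ : Finset (Fin n)) (h : γ.card = k),
      μH[k] (coordProj γ h '' S)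
        = ENNReal.ofReal |LinearMap.det ((coordProjL γ h).comp ι.toLinearMap)| * μH[k] T := by
    intro γ h
    have hcomp : coordProj γ h ∘ φ
        = (fun y => coordProj γ h p + y) ∘ ⇑((coordProjL γ h).comp ι.toLinearMap) := by
      funext x
      ext i
      rfl
    rw [← hST, ← Set.image_comp, hcomp, Set.image_comp]
    rw [Set.image_add_left, measure_preimage_add]
    exact Measure.addHaar_image_linearMap (μH[(k:ℝ)]) _ T
  set D : {γ // γ ∈ Finset.powersetCard k (Finset.univ : Finset (Fin n))} → ℝ :=
    fun γ => LinearMap.det ((coordProjL γ.1 (Finset.mem_powersetCard.mp γ.2).2).comp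
      ι.toLinearMap) with hD
  have hsq' : ∑ γ ∈ (Finset.powersetCard k (Finset.univ : Finset (Fin n))).attach,
      (D γ) ^ 2 = 1 := hsq ι
  have habs : ∀ γ ∈ (Finset.powersetCard k (Finset.univ : Finset (Fin n))).attach,
      |D γ| ≤ 1 := by
    intro γ hγ
    rw [← sq_le_one_iff_abs_le_one]
    rw [← hsq']
    exact Finset.single_le_sum (f := fun γ => (D γ) ^ 2) (fun _ _ => sq_nonneg _) hγ
  have hlow : (1 : ℝ) ≤ ∑ γ ∈ (Finset.powersetCard k (Finset.univ : Finset (Fin n))).attach,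
      |D γ| := by
    rw [← hsq']
    refine Finset.sum_le_sum fun γ hγ => ?_
    rw [← sq_abs, sq]
    calc |D γ| * |D γ| ≤ 1 * |D γ| :=
        mul_le_mul_of_nonneg_right (habs γ hγ) (abs_nonneg _)
      _ = |D γ| := one_mul _
  have hup : (∑ γ ∈ (Finset.powersetCard k (Finset.univ : Finset (Fin n))).attach, |D γ|)
      ≤ Real.sqrt (n.choose k) := by
    have h1 : (∑ γ ∈ (Finset.powersetCard k (Finset.univ : Finset (Fin n))).attach, |D γ|) ^ 2
        ≤ (n.choose k : ℝ) := by
      have h2 := sq_sum_le_card_mul_sum_sq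
        (s := (Finset.powersetCard k (Finset.univ : Finset (Fin n))).attach)
        (f := fun γ => |D γ|)
      simp only [sq_abs] at h2
      rw [hsq', Finset.card_attach, Finset.card_powersetCard, Finset.card_univ,
        Fintype.card_fin, mul_one] at h2
      exact h2
    have h3 := Real.sqrt_le_sqrt h1
    rwa [Real.sqrt_sq (Finset.sum_nonneg fun _ _ => abs_nonneg _)] at h3
  have hsum : (∑ γ ∈ (Finset.powersetCard k (Finset.univ : Finset (Fin n))).attach,
        μH[k] (coordProj γ.1 (Finset.mem_powersetCard.mp γ.2).2 '' S))
      = ENNReal.ofReal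
          (∑ γ ∈ (Finset.powersetCard k (Finset.univ : Finset (Fin n))).attach, |D γ|)
        * μH[k] T := by
    rw [ENNReal.ofReal_sum_of_nonneg (fun _ _ => abs_nonneg _), Finset.sum_mul]
    exact Finset.sum_congr rfl fun γ _ =>
      hterm γ.1 (Finset.mem_powersetCard.mp γ.2).2
  constructor
  · rw [hμS, hsum]
    conv_lhs => rw [← one_mul (μH[(k:ℝ)] T)]
    refine mul_le_mul_left ?_ _
    rw [← ENNReal.ofReal_one]
    exact ENNReal.ofReal_le_ofReal hlow
  · rw [hsum, hμS]
    exact mul_le_mul_left (ENNReal.ofReal_le_ofReal hup) _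

/-- **Projection sandwich for subsets of `k`-planes**: if `S` is a Borel subset of a
`k`-dimensional affine subspace `V` of `ℝⁿ`, then
`μH[k](S) ≤ Σ_γ μH[k](π_γ '' S) ≤ √(C(n,k)) · μH[k](S)`, the sum running over all
`k`-element coordinate subsets `γ`. -/
theorem projection_sandwich (k n : ℕ) (V : AffineSubspace ℝ (EuclideanSpace ℝ (Fin n)))
    (hV : Module.finrank ℝ V.direction = k)
    (S : Set (EuclideanSpace ℝ (Fin n))) (hSV : S ⊆ (V : Set (EuclideanSpace ℝ (Fin n))))
    (hS : MeasurableSet S) :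
    μH[k] S ≤
        (∑ γ ∈ (Finset.powersetCard k (Finset.univ : Finset (Fin n))).attach,
          μH[k] (coordProj γ.1 (Finset.mem_powersetCard.mp γ.2).2 '' S)) ∧
      (∑ γ ∈ (Finset.powersetCard k (Finset.univ : Finset (Fin n))).attach,
          μH[k] (coordProj γ.1 (Finset.mem_powersetCard.mp γ.2).2 '' S)) ≤
        ENNReal.ofReal (Real.sqrt (n.choose k)) * μH[k] S := by
  rcases (V : Set (EuclideanSpace ℝ (Fin n))).eq_empty_or_nonempty with hVe | ⟨p, hp⟩
  · have hSe : S = ∅ := Set.subset_empty_iff.mp (hVe ▸ hSV)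
    subst hSe
    constructor <;> simp
  · exact projection_sandwich_aux k n V hV S hSV hS p hp
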